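/- Let F be a null 2-form on Minkowski space with fundamental vector ℓ (the future-pointing null vector with F(F(x)) = −η(ℓ,x)ℓ for all x). Then there exists a spacelike unit vector e₂ with η(ℓ,e₂) = 0 such that F = ℓ ∧ e₂; moreover, any vector e₂′ with η(e₂′,e₂′) = 1, η(ℓ,e₂′) = 0 and F = ℓ ∧ e₂′ satisfies e₂′ = e₂ + ζ·ℓ for some ζ ∈ ℝ. -/

import Mathlib

open Matrix BigOperators

noncomputable section

/-- Minkowski space: ℝ⁴. -/
abbrev V4 : Type := Fin 4 → ℝ

/-- The signature signs of η = diag(−1,1,1,1). -/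
def etaSgn (i : Fin 4) : ℝ := if i = 0 then -1 else 1

/-- The Lorentzian bilinear form η(x,y) = −x⁰y⁰ + x¹y¹ + x²y² + x³y³. -/
def etaB (x y : V4) : ℝ := ∑ i, etaSgn i * x i * y i

/-- Action of a 2-form on a vector: F(x)^α = η^{αμ} F_{μν} x^ν. -/
def act (F : Matrix (Fin 4) (Fin 4) ℝ) (x : V4) : V4 :=
  fun a => etaSgn a * ∑ b, F a b * x b

/-- The product of 2-forms: (F,G) = ½ F_{αβ} G^{αβ}. -/
def formInner (F G : Matrix (Fin 4) (Fin 4) ℝ) : ℝ :=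
  (1 / 2) * ∑ a, ∑ b, etaSgn a * etaSgn b * F a b * G a b

/-- The Levi-Civita symbol on four indices, with ε₀₁₂₃ = 1. -/
def eps (a b c d : Fin 4) : ℝ :=
  Matrix.det (Matrix.of fun i j => if ![a, b, c, d] i = j then (1 : ℝ) else 0)

/-- The Hodge dual: (*F)_{αβ} = ½ ε_{αβμν} F^{μν}. -/
def hodge (F : Matrix (Fin 4) (Fin 4) ℝ) : Matrix (Fin 4) (Fin 4) ℝ :=
  Matrix.of fun a b => (1 / 2) * ∑ m, ∑ n, eps a b m n * (etaSgn m * etaSgn n * F m n)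

/-- Exterior product of vectors: (u∧v)_{αβ} = u_α v_β − u_β v_α, with indices lowered by η. -/
def wedge (u v : V4) : Matrix (Fin 4) (Fin 4) ℝ :=
  Matrix.of fun a b => (etaSgn a * u a) * (etaSgn b * v b) - (etaSgn b * u b) * (etaSgn a * v a)

/-- A null 2-form: a nonzero antisymmetric matrix F with (F,F) = 0 and (*F,F) = 0. -/
def IsNullForm (F : Matrix (Fin 4) (Fin 4) ℝ) : Prop :=
  Fᵀ = -F ∧ F ≠ 0 ∧ formInner F F = 0 ∧ formInner (hodge F) F = 0

/-- A t-volume: an antisymmetric matrix U with (U,U) = −1 and (*U,U) = 0. -/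
def IsTVolume (U : Matrix (Fin 4) (Fin 4) ℝ) : Prop :=
  Uᵀ = -U ∧ formInner U U = -1 ∧ formInner (hodge U) U = 0

lemma wedge_smul (u v : V4) (c : ℝ) : wedge u (c • v) = c • wedge u v := by
  ext a b
  simp only [wedge, Matrix.of_apply, Matrix.smul_apply, Pi.smul_apply, smul_eq_mul]
  ring

theorem nullForm_canonical_wedge (F : Matrix (Fin 4) (Fin 4) ℝ) (hF : IsNullForm F)
    (ℓ : V4) (hℓnull : etaB ℓ ℓ = 0) (hℓfut : 0 < ℓ 0)
    (hfund : ∀ x : V4, act F (act F x) = (-(etaB ℓ x)) • ℓ) :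
    ∃ e₂ : V4, etaB e₂ e₂ = 1 ∧ etaB ℓ e₂ = 0 ∧ F = wedge ℓ e₂ ∧
      ∀ e₂' : V4, etaB e₂' e₂' = 1 → etaB ℓ e₂' = 0 → F = wedge ℓ e₂' →
        ∃ ζ : ℝ, e₂' = e₂ + ζ • ℓ := by
  have hp : ℓ 0 ≠ 0 := ne_of_gt hℓfut
  have hA : ∀ a b, F b a = - F a b := fun a b => by
    have := congrFun (congrFun hF.1 a) b
    simpa using this
  have h00 : F 0 0 = 0 := by have := hA 0 0; linarith
  have h11 : F 1 1 = 0 := by have := hA 1 1; linarith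
  have h22 : F 2 2 = 0 := by have := hA 2 2; linarith
  have h33 : F 3 3 = 0 := by have := hA 3 3; linarith
  have h10 : F 1 0 = -F 0 1 := hA 0 1
  have h20 : F 2 0 = -F 0 2 := hA 0 2
  have h30 : F 3 0 = -F 0 3 := hA 0 3
  have h21 : F 2 1 = -F 1 2 := hA 1 2
  have h31 : F 3 1 = -F 1 3 := hA 1 3
  have h32 : F 3 2 = -F 2 3 := hA 2 3
  have hM := fun (a b : Fin 4) => congrFun (hfund (Pi.single b 1)) a
  simp only [act, etaB, Fin.sum_univ_four, Pi.single_apply, Pi.smul_apply, smul_eq_mul,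
    mul_ite, mul_one, mul_zero] at hM
  have m00 := hM 0 0; have m10 := hM 1 0; have m20 := hM 2 0; have m30 := hM 3 0
  have m11 := hM 1 1; have m22 := hM 2 2; have m33 := hM 3 3
  simp (config := {decide := true}) [etaSgn] at m00 m10 m20 m30 m11 m22 m33
  simp only [h00, h11, h22, h33, h10, h20, h30, h21, h31, h32] at m00 m10 m20 m30 m11 m22 m33
  have hm00 : ℓ 0 * ℓ 0 = F 0 1 ^ 2 + F 0 2 ^ 2 + F 0 3 ^ 2 := by
    first | linear_combination m00 | linear_combination -m00
  have hs1 : ℓ 0 * ℓ 1 = -(F 0 2 * F 1 2) - F 0 3 * F 1 3 := by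
    first | linear_combination m10 | linear_combination -m10
  have hs2 : ℓ 0 * ℓ 2 = F 0 1 * F 1 2 - F 0 3 * F 2 3 := by
    first | linear_combination m20 | linear_combination -m20
  have hs3 : ℓ 0 * ℓ 3 = F 0 1 * F 1 3 + F 0 2 * F 2 3 := by
    first | linear_combination m30 | linear_combination -m30
  have hq1 : ℓ 1 * ℓ 1 = F 1 2 ^ 2 + F 1 3 ^ 2 - F 0 1 ^ 2 := by
    first | linear_combination m11 | linear_combination -m11
  have hq2 : ℓ 2 * ℓ 2 = F 1 2 ^ 2 + F 2 3 ^ 2 - F 0 2 ^ 2 := by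
    first | linear_combination m22 | linear_combination -m22
  have hq3 : ℓ 3 * ℓ 3 = F 1 3 ^ 2 + F 2 3 ^ 2 - F 0 3 ^ 2 := by
    first | linear_combination m33 | linear_combination -m33
  have hn : ℓ 1 ^ 2 + ℓ 2 ^ 2 + ℓ 3 ^ 2 = ℓ 0 ^ 2 := by
    simp only [etaB, Fin.sum_univ_four] at hℓnull
    simp (config := {decide := true}) [etaSgn] at hℓnull
    linear_combination hℓnull
  have hB2 : F 1 2 ^ 2 + F 1 3 ^ 2 + F 2 3 ^ 2 = F 0 1 ^ 2 + F 0 2 ^ 2 + F 0 3 ^ 2 := by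
    linear_combination (1/2) * hn + (1/2) * hm00 - (1/2) * hq1 - (1/2) * hq2 - (1/2) * hq3
  have hEB2 : (F 0 1 * F 2 3 - F 0 2 * F 1 3 + F 0 3 * F 1 2) ^ 2 = 0 := by
    linear_combination (F 0 1 ^ 2 + F 0 2 ^ 2 + F 0 3 ^ 2) * hB2 - (ℓ 0 * ℓ 0) * hn -
      (ℓ 0 * ℓ 0 + F 0 1 ^ 2 + F 0 2 ^ 2 + F 0 3 ^ 2) * hm00 +
      (ℓ 0 * ℓ 1 + (-(F 0 2 * F 1 2) - F 0 3 * F 1 3)) * hs1 +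
      (ℓ 0 * ℓ 2 + (F 0 1 * F 1 2 - F 0 3 * F 2 3)) * hs2 +
      (ℓ 0 * ℓ 3 + (F 0 1 * F 1 3 + F 0 2 * F 2 3)) * hs3
  have hEB : F 0 1 * F 2 3 - F 0 2 * F 1 3 + F 0 3 * F 1 2 = 0 := by
    exact pow_eq_zero_iff (two_ne_zero) |>.mp hEB2
  have hS : ℓ 1 * F 0 1 + ℓ 2 * F 0 2 + ℓ 3 * F 0 3 = 0 := by
    have h : ℓ 0 * (ℓ 1 * F 0 1 + ℓ 2 * F 0 2 + ℓ 3 * F 0 3) = 0 := by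
      linear_combination F 0 1 * hs1 + F 0 2 * hs2 + F 0 3 * hs3
    rcases mul_eq_zero.mp h with h' | h'
    · exact absurd h' hp
    · exact h'
  set w : V4 := ![0, -F 0 1, -F 0 2, -F 0 3] with hw
  have hkey : ℓ 0 • (ℓ 0 • F) = ℓ 0 • wedge ℓ w := by
    ext a b
    fin_cases a <;> fin_cases b <;>
      simp only [Fin.reduceFinMk, hw, wedge, Matrix.of_apply, Matrix.smul_apply, smul_eq_mul,
        Matrix.cons_val_zero, Matrix.cons_val_one, Matrix.head_cons,
        Matrix.cons_val_two, Matrix.tail_cons, Matrix.cons_val_three,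
        h00, h11, h22, h33, h10, h20, h30, h21, h31, h32] <;>
      simp (config := { decide := true }) only [etaSgn, reduceIte]
    · ring
    · ring
    · ring
    · ring
    · ring
    · ring
    · first | linear_combination F 1 2 * hm00 + F 0 2 * hs1 - F 0 1 * hs2 + F 0 3 * hEB | linear_combination -(F 1 2 * hm00 + F 0 2 * hs1 - F 0 1 * hs2 + F 0 3 * hEB)
    · first | linear_combination F 1 3 * hm00 + F 0 3 * hs1 - F 0 1 * hs3 - F 0 2 * hEB | linear_combination -(F 1 3 * hm00 + F 0 3 * hs1 - F 0 1 * hs3 - F 0 2 * hEB)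
    · ring
    · first | linear_combination F 1 2 * hm00 + F 0 2 * hs1 - F 0 1 * hs2 + F 0 3 * hEB | linear_combination -(F 1 2 * hm00 + F 0 2 * hs1 - F 0 1 * hs2 + F 0 3 * hEB)
    · ring
    · first | linear_combination F 2 3 * hm00 + F 0 3 * hs2 - F 0 2 * hs3 + F 0 1 * hEB | linear_combination -(F 2 3 * hm00 + F 0 3 * hs2 - F 0 2 * hs3 + F 0 1 * hEB)
    · ring
    · first | linear_combination F 1 3 * hm00 + F 0 3 * hs1 - F 0 1 * hs3 - F 0 2 * hEB | linear_combination -(F 1 3 * hm00 + F 0 3 * hs1 - F 0 1 * hs3 - F 0 2 * hEB)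
    · first | linear_combination F 2 3 * hm00 + F 0 3 * hs2 - F 0 2 * hs3 + F 0 1 * hEB | linear_combination -(F 2 3 * hm00 + F 0 3 * hs2 - F 0 2 * hs3 + F 0 1 * hEB)
    · ring
  have h1 : ℓ 0 • F = wedge ℓ w := smul_right_injective _ hp hkey
  have hFw : F = wedge ℓ ((ℓ 0)⁻¹ • w) := by
    rw [wedge_smul, ← h1, inv_smul_smul₀ hp]
  refine ⟨(ℓ 0)⁻¹ • w, ?_, ?_, hFw, ?_⟩
  · simp only [etaB, Fin.sum_univ_four, hw, Pi.smul_apply, smul_eq_mul,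
      Matrix.cons_val_zero, Matrix.cons_val_one, Matrix.head_cons,
      Matrix.cons_val_two, Matrix.tail_cons, Matrix.cons_val_three]
    simp (config := {decide := true}) [etaSgn]
    field_simp
    first | linear_combination hm00 | linear_combination -hm00
  · simp only [etaB, Fin.sum_univ_four, hw, Pi.smul_apply, smul_eq_mul,
      Matrix.cons_val_zero, Matrix.cons_val_one, Matrix.head_cons,
      Matrix.cons_val_two, Matrix.tail_cons, Matrix.cons_val_three]
    simp (config := {decide := true}) [etaSgn]
    field_simp
    first | linear_combination hS | linear_combination -hS | linear_combination (ℓ 0 ^ 2) * hS | linear_combination (-(ℓ 0 ^ 2)) * hS | linear_combination (ℓ 0) * hS | linear_combination (-(ℓ 0)) * hS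
  · intro e₂' _ _ he'
    refine ⟨e₂' 0 / ℓ 0, ?_⟩
    have h := he'.symm.trans hFw
    funext b
    have hb := congrFun (congrFun h 0) b
    simp only [wedge, Matrix.of_apply, hw, Pi.smul_apply, smul_eq_mul] at hb
    fin_cases b <;>
      simp (config := {decide := true}) only [Fin.reduceFinMk, etaSgn, reduceIte, hw, Pi.add_apply, Pi.smul_apply, smul_eq_mul, Matrix.cons_val_zero, Matrix.cons_val_one, Matrix.head_cons, Matrix.cons_val_two, Matrix.tail_cons, Matrix.cons_val_three] at hb ⊢ <;>
      field_simp at hb ⊢ <;>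
      first | linear_combination ℓ 0 * hb | linear_combination (-(ℓ 0)) * hb | linear_combination hb | linear_combination -hb | (apply mul_left_cancel₀ hp; linear_combination -hb) | ring

end
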